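/- The Wasserstein–Fréchet mean of a random density F with square-integrable random quantile function F^{-1} is characterized by its quantile function: the minimizer over distribution functions G of E[d_W^2(F, G)] = E[∫_0^1 (F^{-1}(t) - G^{-1}(t))^2 dt] is attained when G^{-1}(t) = E[F^{-1}(t)] for almost every t, provided t ↦ E[F^{-1}(t)] is a valid quantile function (nondecreasing and left-continuous). -/

import Mathlib

open MeasureTheory Set

/-- Characterization of the Wasserstein–Fréchet mean via quantile functions: if `X(ω,·)` is the
random quantile function of a random density, square-integrable, and `t ↦ E[X(t)]` is a valid
quantile function (nondecreasing), then for every other quantile function `g` (nondecreasing,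
square-integrable),
`E[∫_0^1 (X(t) - E X(t))² dt] ≤ E[∫_0^1 (X(t) - g(t))² dt]`;
i.e. the Fréchet functional `G ↦ E[d_W²(F,G)]` is minimized at the distribution whose quantile
function is the pointwise mean `t ↦ E[F⁻¹(t)]`. -/
theorem wasserstein_frechet_mean_quantile
    {Ω : Type*} [MeasurableSpace Ω] (μ : Measure Ω) [IsProbabilityMeasure μ]
    (X : Ω → ℝ → ℝ)
    (hX : Measurable (Function.uncurry X))
    (hXmono : ∀ᵐ ω ∂μ, MonotoneOn (X ω) (Ioo (0 : ℝ) 1))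
    (hX2 : Integrable (fun q : Ω × ℝ => (X q.1 q.2) ^ 2)
      (μ.prod ((volume : Measure ℝ).restrict (Ioo (0 : ℝ) 1))))
    (hmean_mono : MonotoneOn (fun t => ∫ ω, X ω t ∂μ) (Ioo (0 : ℝ) 1)) :
    ∀ g : ℝ → ℝ, MonotoneOn g (Ioo (0 : ℝ) 1) →
      IntegrableOn (fun t => (g t) ^ 2) (Ioo (0 : ℝ) 1) →
      ∫ ω, (∫ t in Ioo (0 : ℝ) 1, (X ω t - ∫ ω', X ω' t ∂μ) ^ 2) ∂μ
        ≤ ∫ ω, (∫ t in Ioo (0 : ℝ) 1, (X ω t - g t) ^ 2) ∂μ := by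
  intro g hgmono hg2
  set lam : Measure ℝ := (volume : Measure ℝ).restrict (Ioo (0 : ℝ) 1) with hlam
  haveI : IsFiniteMeasure lam := ⟨by simp [hlam, Real.volume_Ioo]⟩
  set m : ℝ → ℝ := fun t => ∫ ω, X ω t ∂μ with hmdef
  set ν : Measure (Ω × ℝ) := μ.prod lam with hν
  haveI : IsFiniteMeasure ν := by rw [hν]; infer_instance
  set f : Ω × ℝ → ℝ := fun q => X q.1 q.2 with hfdef
  -- basic measurability
  have hfsm : StronglyMeasurable f := hX.stronglyMeasurable
  have hmsm : StronglyMeasurable m := hfsm.integral_prod_left'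
  -- f is in L² of ν
  have hfL2 : MemLp f 2 ν := (memLp_two_iff_integrable_sq hfsm.aestronglyMeasurable).2 hX2
  -- slices: for a.e. t, ω ↦ X ω t is in L²(μ)
  have hslice_sq : ∀ᵐ t ∂lam, Integrable (fun ω => X ω t ^ 2) μ := hX2.prod_left_ae
  have hslice_meas : ∀ t : ℝ, Measurable fun ω => X ω t := fun t =>
    hX.comp (measurable_id.prodMk measurable_const)
  have hsliceL2 : ∀ᵐ t ∂lam, MemLp (fun ω => X ω t) 2 μ := by
    filter_upwards [hslice_sq] with t ht
    exact (memLp_two_iff_integrable_sq (hslice_meas t).aestronglyMeasurable).2 ht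
  -- m is in L²(lam): Jensen bound m t ^ 2 ≤ ∫ X² dμ
  have hm2 : MemLp m 2 lam := by
    refine (memLp_two_iff_integrable_sq hmsm.aestronglyMeasurable).2 ?_
    have hB : Integrable (fun t => ∫ ω, X ω t ^ 2 ∂μ) lam := hX2.integral_prod_right
    refine hB.mono' ((hmsm.pow 2).aestronglyMeasurable) ?_
    filter_upwards [hsliceL2] with t ht
    have hv := ProbabilityTheory.variance_nonneg (fun ω => X ω t) μ
    rw [ProbabilityTheory.variance_eq_sub ht] at hv
    have : m t ^ 2 ≤ ∫ ω, X ω t ^ 2 ∂μ := by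
      have : (∫ ω, X ω t ∂μ) ^ 2 ≤ ∫ ω, ((fun ω => X ω t) ^ 2) ω ∂μ := by linarith
      simpa [hmdef, Pi.pow_apply] using this
    calc ‖m t ^ 2‖ = m t ^ 2 := by rw [Real.norm_eq_abs, abs_of_nonneg (sq_nonneg _)]
    _ ≤ _ := this
  -- g is in L²(lam)
  have hgmeas : AEMeasurable g lam := aemeasurable_restrict_of_monotoneOn measurableSet_Ioo hgmono
  have hgL2lam : MemLp g 2 lam :=
    (memLp_two_iff_integrable_sq hgmeas.aestronglyMeasurable).2 hg2
  -- pull back to ν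
  have hmp : MeasurePreserving Prod.snd ν lam :=
    ⟨measurable_snd, by rw [hν, Measure.map_snd_prod, measure_univ, one_smul]⟩
  have hML2 : MemLp (fun q : Ω × ℝ => m q.2) 2 ν := hm2.comp_measurePreserving hmp
  have hGL2 : MemLp (fun q : Ω × ℝ => g q.2) 2 ν := hgL2lam.comp_measurePreserving hmp
  -- differences in L²
  have hFM : MemLp (fun q : Ω × ℝ => f q - m q.2) 2 ν := hfL2.sub hML2
  have hFG : MemLp (fun q : Ω × ℝ => f q - g q.2) 2 ν := hfL2.sub hGL2
  have hMG : MemLp (fun q : Ω × ℝ => m q.2 - g q.2) 2 ν := hML2.sub hGL2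
  have hIFM : Integrable (fun q : Ω × ℝ => (f q - m q.2) ^ 2) ν :=
    (memLp_two_iff_integrable_sq hFM.aestronglyMeasurable).1 hFM
  have hIFG : Integrable (fun q : Ω × ℝ => (f q - g q.2) ^ 2) ν :=
    (memLp_two_iff_integrable_sq hFG.aestronglyMeasurable).1 hFG
  have hIMG : Integrable (fun q : Ω × ℝ => (m q.2 - g q.2) ^ 2) ν :=
    (memLp_two_iff_integrable_sq hMG.aestronglyMeasurable).1 hMG
  -- cross term integrable
  have hcrossInt : Integrable (fun q : Ω × ℝ => (f q - m q.2) * (m q.2 - g q.2)) ν := by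
    have := hFM.smul (φ := fun q : Ω × ℝ => m q.2 - g q.2) hMG
      (r := 1) (hpqr := ⟨by rw [inv_one, ENNReal.inv_two_add_inv_two]⟩)
    rw [memLp_one_iff_integrable] at this
    have h2 : (fun q : Ω × ℝ => (f q - m q.2) * (m q.2 - g q.2))
        = ((fun q : Ω × ℝ => m q.2 - g q.2) • fun q : Ω × ℝ => f q - m q.2) := by
      funext q; simp [Pi.smul_apply', smul_eq_mul]; ring
    rw [h2]; exact this
  -- cross term vanishes
  have hf1 : Integrable f ν := hfL2.integrable one_le_two
  have hslice1 : ∀ᵐ t ∂lam, Integrable (fun ω => f (ω, t)) μ := hf1.prod_left_ae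
  have hcross : ∫ q, (f q - m q.2) * (m q.2 - g q.2) ∂ν = 0 := by
    rw [hν, integral_prod_symm _ (by rwa [← hν])]
    have : ∀ᵐ t ∂lam, ∫ ω, (f (ω, t) - m t) * (m t - g t) ∂μ = 0 := by
      filter_upwards [hslice1] with t ht
      rw [integral_mul_const, integral_sub ht (integrable_const _)]
      simp [hfdef, hmdef, measure_univ]
    rw [integral_congr_ae this, integral_zero]
  -- pointwise expansion and the key inequality on ν
  have hexp : ∀ q : Ω × ℝ, (f q - g q.2) ^ 2
      = (f q - m q.2) ^ 2 + ((m q.2 - g q.2) ^ 2 + 2 * ((f q - m q.2) * (m q.2 - g q.2))) := by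
    intro q; ring
  have hkey : ∫ q, (f q - m q.2) ^ 2 ∂ν ≤ ∫ q, (f q - g q.2) ^ 2 ∂ν := by
    calc ∫ q, (f q - m q.2) ^ 2 ∂ν
        ≤ ∫ q, (f q - m q.2) ^ 2 ∂ν
          + (∫ q, (m q.2 - g q.2) ^ 2 ∂ν + 2 * ∫ q, (f q - m q.2) * (m q.2 - g q.2) ∂ν) := by
          rw [hcross]
          have : 0 ≤ ∫ q, (m q.2 - g q.2) ^ 2 ∂ν :=
            integral_nonneg fun q => sq_nonneg _
          linarith
      _ = ∫ q, (f q - g q.2) ^ 2 ∂ν := by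
          have e1 : ∫ q, (f q - g q.2) ^ 2 ∂ν
              = ∫ q, ((f q - m q.2) ^ 2
                  + ((m q.2 - g q.2) ^ 2 + 2 * ((f q - m q.2) * (m q.2 - g q.2)))) ∂ν :=
            integral_congr_ae (Filter.Eventually.of_forall fun q => hexp q)
          have hI3 : Integrable
              (fun q : Ω × ℝ => 2 * ((f q - m q.2) * (m q.2 - g q.2))) ν :=
            hcrossInt.const_mul 2
          have hI2 : Integrable (fun q : Ω × ℝ =>
              (m q.2 - g q.2) ^ 2 + 2 * ((f q - m q.2) * (m q.2 - g q.2))) ν :=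
            hIMG.add hI3
          rw [e1, integral_add hIFM hI2, integral_add hIMG hI3, integral_const_mul]
  -- convert the iterated integrals
  have hL : ∫ ω, (∫ t in Ioo (0 : ℝ) 1, (X ω t - m t) ^ 2) ∂μ
      = ∫ q, (f q - m q.2) ^ 2 ∂ν := by
    rw [hν]
    exact integral_integral (by rwa [← hν])
  have hR : ∫ ω, (∫ t in Ioo (0 : ℝ) 1, (X ω t - g t) ^ 2) ∂μ
      = ∫ q, (f q - g q.2) ^ 2 ∂ν := by
    rw [hν]
    exact integral_integral (by rwa [← hν])
  rw [hL, hR]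
  exact hkey
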